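/- For all words σ, τ ∈ Ω, one has ξ^{-1} ‖φ'_σ‖ ‖φ'_τ‖ ≤ ‖φ'_{στ}‖ ≤ ‖φ'_σ‖ ‖φ'_τ‖. -/

import Mathlib

open MeasureTheory Filter Metric

noncomputable section

/-- A cookie-cutter system on `J = [0,1]`. -/
structure CookieCutter where
  N : ℕ
  hN : 2 ≤ N
  Jsub : Fin N → Set ℝ
  f : ℝ → ℝ
  φ : Fin N → ℝ → ℝ
  c : ℝ
  γ : ℝ
  b : ℝ
  B : ℝ
  hJsub_sub : ∀ j, Jsub j ⊆ Set.Icc 0 1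
  hJsub_interval : ∀ j, ∃ u v : ℝ, u ≤ v ∧ Jsub j = Set.Icc u v
  hJsub_disj : ∀ i j, i ≠ j → Disjoint (Jsub i) (Jsub j)
  hbij : ∀ j, Set.BijOn f (Jsub j) (Set.Icc 0 1)
  hφ_maps : ∀ j, ∀ x ∈ Set.Icc (0:ℝ) 1, φ j x ∈ Jsub j
  hφ_rinv : ∀ j, ∀ x ∈ Set.Icc (0:ℝ) 1, f (φ j x) = x
  hφ_linv : ∀ j, ∀ x ∈ Jsub j, φ j (f x) = x
  hfdiff : ∀ j, ∀ x ∈ Jsub j, DifferentiableAt ℝ f x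
  hφdiff : ∀ j, ∀ x ∈ Set.Icc (0:ℝ) 1, DifferentiableAt ℝ (φ j) x
  hc : 0 < c
  hγ : γ ∈ Set.Ioc (0:ℝ) 1
  hHolder : ∀ j, ∀ x ∈ Jsub j, ∀ y ∈ Jsub j, |deriv f x - deriv f y| ≤ c * |x - y| ^ γ
  hb : IsGLB ((fun x => |deriv f x|) '' ⋃ j, Jsub j) b
  hB : IsLUB ((fun x => |deriv f x|) '' ⋃ j, Jsub j) B
  hb1 : 1 < b

namespace CookieCutter

variable (cc : CookieCutter)

/-- `φ_σ = φ_{σ_1} ∘ ⋯ ∘ φ_{σ_n}` for a word `σ`. -/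
def wordMap : List (Fin cc.N) → ℝ → ℝ
  | [] => id
  | j :: rest => cc.φ j ∘ wordMap rest

/-- The basic interval `J_σ = φ_σ(J)`. -/
def Jc (σ : List (Fin cc.N)) : Set ℝ := cc.wordMap σ '' Set.Icc 0 1

/-- The diameter `|J_σ|`. -/
def diamJ (σ : List (Fin cc.N)) : ℝ := Metric.diam (cc.Jc σ)

/-- `‖φ'_σ‖ = sup_{x ∈ J} |φ'_σ(x)|`. -/
def φnorm (σ : List (Fin cc.N)) : ℝ :=
  sSup ((fun x => |deriv (cc.wordMap σ) x|) '' Set.Icc 0 1)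

/-- The distortion constant `ξ = exp (c / (b^γ − 1))`. -/
def xi : ℝ := Real.exp (cc.c / (cc.b ^ cc.γ - 1))

/-- The cookie-cutter set `E = ⋂_{n ≥ 1} ⋃_{σ ∈ Ω_n} J_σ`. -/
def E : Set ℝ := ⋂ (n : ℕ) (_ : 1 ≤ n), ⋃ σ : Fin n → Fin cc.N, cc.Jc (List.ofFn σ)

/-- `η = ξ^{9h}`. -/
def eta (h : ℝ) : ℝ := cc.xi ^ ((9:ℝ) * h)

/-- `L = η³ ξ^{3h}`. -/
def Lconst (h : ℝ) : ℝ := (cc.eta h) ^ 3 * cc.xi ^ ((3:ℝ) * h)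

/-- A Gibbs-like measure for the cookie-cutter system: a Borel probability measure
supported on `E` with `η⁻¹|J_σ|^h ≤ μ(J_σ) ≤ η|J_σ|^h` for every word `σ`. -/
def IsGibbsLike (μ : Measure ℝ) (h : ℝ) : Prop :=
  IsProbabilityMeasure μ ∧ μ (cc.Eᶜ) = 0 ∧
    ∀ σ : List (Fin cc.N), σ ≠ [] →
      (cc.eta h)⁻¹ * cc.diamJ σ ^ h ≤ (μ (cc.Jc σ)).toReal ∧
      (μ (cc.Jc σ)).toReal ≤ cc.eta h * cc.diamJ σ ^ h

/-- A finite maximal antichain in `Ω`. -/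
def IsFMA (Γ : Finset (List (Fin cc.N))) : Prop :=
  (∀ σ ∈ Γ, σ ≠ []) ∧
  (∀ ω : ℕ → Fin cc.N, ∃ k : ℕ, 1 ≤ k ∧ (List.ofFn fun i : Fin k => ω i) ∈ Γ) ∧
  ∀ σ ∈ Γ, ∀ τ ∈ Γ, σ <+: τ → σ = τ

end CookieCutter

/-- The `n`-th quantization error of order `r`. -/
def Vnr (μ : Measure ℝ) (n : ℕ) (r : ℝ) : ℝ :=
  sInf ((fun α : Finset ℝ => ∫ x, Metric.infDist x (α : Set ℝ) ^ r ∂μ) ''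
    {α : Finset ℝ | α.Nonempty ∧ α.card ≤ n})

/-- The auxiliary quantization error `u_{n,r}` with `U = (0,1)`. -/
def unr (μ : Measure ℝ) (n : ℕ) (r : ℝ) : ℝ :=
  sInf ((fun α : Finset ℝ =>
      ∫ x, Metric.infDist x ((α : Set ℝ) ∪ (Set.Ioo (0:ℝ) 1)ᶜ) ^ r ∂μ) ''
    {α : Finset ℝ | α.card ≤ n})


namespace CookieCutter

variable (cc : CookieCutter)

private lemma b_pos : (0:ℝ) < cc.b := lt_trans one_pos cc.hb1

private lemma bγ_gt_one : 1 < cc.b ^ cc.γ :=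
  (Real.one_lt_rpow_iff_of_pos cc.b_pos).2 (Or.inl ⟨cc.hb1, cc.hγ.1⟩)

private lemma phi_mem_union {j : Fin cc.N} {x : ℝ} (hx : x ∈ Set.Icc (0:ℝ) 1) :
    cc.φ j x ∈ ⋃ i, cc.Jsub i :=
  Set.mem_iUnion.2 ⟨j, cc.hφ_maps j x hx⟩

private lemma phi_mem_I {j : Fin cc.N} {x : ℝ} (hx : x ∈ Set.Icc (0:ℝ) 1) :
    cc.φ j x ∈ Set.Icc (0:ℝ) 1 :=
  cc.hJsub_sub j (cc.hφ_maps j x hx)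

private lemma derivf_ge {y : ℝ} (hy : y ∈ ⋃ i, cc.Jsub i) : cc.b ≤ |deriv cc.f y| :=
  cc.hb.1 ⟨y, hy, rfl⟩

private lemma deriv_phi_chain (j : Fin cc.N) {x : ℝ} (hx : x ∈ Set.Icc (0:ℝ) 1) :
    deriv cc.f (cc.φ j x) * deriv (cc.φ j) x = 1 := by
  have hp : cc.φ j x ∈ cc.Jsub j := cc.hφ_maps j x hx
  have hcomp : HasDerivAt (cc.f ∘ cc.φ j) (deriv cc.f (cc.φ j x) * deriv (cc.φ j) x) x :=
    (cc.hfdiff j _ hp).hasDerivAt.comp x (cc.hφdiff j x hx).hasDerivAt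
  have h1 : HasDerivWithinAt (cc.f ∘ cc.φ j) (deriv cc.f (cc.φ j x) * deriv (cc.φ j) x)
      (Set.Icc 0 1) x := hcomp.hasDerivWithinAt
  have h2 : HasDerivWithinAt (cc.f ∘ cc.φ j) 1 (Set.Icc 0 1) x :=
    (hasDerivWithinAt_id x (Set.Icc 0 1)).congr
      (fun y hy => cc.hφ_rinv j y hy) (cc.hφ_rinv j x hx)
  have hud : UniqueDiffWithinAt ℝ (Set.Icc (0:ℝ) 1) x :=
    (uniqueDiffOn_Icc one_pos) x hx
  calc deriv cc.f (cc.φ j x) * deriv (cc.φ j) x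
      = derivWithin (cc.f ∘ cc.φ j) (Set.Icc 0 1) x := (h1.derivWithin hud).symm
    _ = 1 := h2.derivWithin hud

private lemma abs_deriv_phi (j : Fin cc.N) {x : ℝ} (hx : x ∈ Set.Icc (0:ℝ) 1) :
    |deriv (cc.φ j) x| = |deriv cc.f (cc.φ j x)|⁻¹ :=
  eq_inv_of_mul_eq_one_left
    (by rw [← abs_mul, mul_comm, cc.deriv_phi_chain j hx, abs_one])

private lemma abs_deriv_phi_pos (j : Fin cc.N) {x : ℝ} (hx : x ∈ Set.Icc (0:ℝ) 1) :
    0 < |deriv (cc.φ j) x| := by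
  rw [cc.abs_deriv_phi j hx]
  exact inv_pos.2 (lt_of_lt_of_le cc.b_pos (cc.derivf_ge (cc.phi_mem_union (j := j) hx)))

private lemma abs_deriv_phi_le (j : Fin cc.N) {x : ℝ} (hx : x ∈ Set.Icc (0:ℝ) 1) :
    |deriv (cc.φ j) x| ≤ cc.b⁻¹ := by
  rw [cc.abs_deriv_phi j hx]
  exact inv_anti₀ cc.b_pos (cc.derivf_ge (cc.phi_mem_union (j := j) hx))

private lemma phi_contract (j : Fin cc.N) {u v : ℝ} (hu : u ∈ Set.Icc (0:ℝ) 1)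
    (hv : v ∈ Set.Icc (0:ℝ) 1) : |cc.φ j u - cc.φ j v| ≤ cc.b⁻¹ * |u - v| := by
  have := Convex.norm_image_sub_le_of_norm_deriv_le (f := cc.φ j) (C := cc.b⁻¹)
    (fun x hx => cc.hφdiff j x hx)
    (fun x hx => by rw [Real.norm_eq_abs]; exact cc.abs_deriv_phi_le j hx)
    (convex_Icc 0 1) hv hu
  simpa [Real.norm_eq_abs] using this

private lemma wordMap_mem (σ : List (Fin cc.N)) {x : ℝ} (hx : x ∈ Set.Icc (0:ℝ) 1) :
    cc.wordMap σ x ∈ Set.Icc (0:ℝ) 1 := by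
  induction σ with
  | nil => exact hx
  | cons j rest ih => exact cc.phi_mem_I (j := j) ih

private lemma wordMap_diff (σ : List (Fin cc.N)) {x : ℝ} (hx : x ∈ Set.Icc (0:ℝ) 1) :
    DifferentiableAt ℝ (cc.wordMap σ) x := by
  induction σ with
  | nil => exact differentiableAt_id
  | cons j rest ih =>
      exact DifferentiableAt.comp x (cc.hφdiff j _ (cc.wordMap_mem rest hx)) ih

private lemma wordMap_deriv_cons (j : Fin cc.N) (σ : List (Fin cc.N)) {x : ℝ}
    (hx : x ∈ Set.Icc (0:ℝ) 1) :
    deriv (cc.wordMap (j :: σ)) x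
      = deriv (cc.φ j) (cc.wordMap σ x) * deriv (cc.wordMap σ) x :=
  deriv_comp (x := x) (cc.hφdiff j _ (cc.wordMap_mem σ hx)) (cc.wordMap_diff σ hx)

private lemma wordMap_deriv_pos (σ : List (Fin cc.N)) {x : ℝ} (hx : x ∈ Set.Icc (0:ℝ) 1) :
    0 < |deriv (cc.wordMap σ) x| := by
  induction σ with
  | nil => simp [wordMap]
  | cons j rest ih =>
      rw [cc.wordMap_deriv_cons j rest hx, abs_mul]
      exact mul_pos (cc.abs_deriv_phi_pos j (cc.wordMap_mem rest hx)) ih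

private lemma wordMap_deriv_le (σ : List (Fin cc.N)) {x : ℝ} (hx : x ∈ Set.Icc (0:ℝ) 1) :
    |deriv (cc.wordMap σ) x| ≤ cc.b⁻¹ ^ σ.length := by
  induction σ with
  | nil => simp [wordMap]
  | cons j rest ih =>
      rw [cc.wordMap_deriv_cons j rest hx, abs_mul, List.length_cons, pow_succ,
        mul_comm (cc.b⁻¹ ^ rest.length)]
      exact mul_le_mul (cc.abs_deriv_phi_le j (cc.wordMap_mem rest hx)) ih (abs_nonneg _)
        (inv_nonneg.2 cc.b_pos.le)

private lemma wordMap_contract (σ : List (Fin cc.N)) {x y : ℝ} (hx : x ∈ Set.Icc (0:ℝ) 1)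
    (hy : y ∈ Set.Icc (0:ℝ) 1) :
    |cc.wordMap σ x - cc.wordMap σ y| ≤ cc.b⁻¹ ^ σ.length * |x - y| := by
  induction σ with
  | nil => simp [wordMap]
  | cons j rest ih =>
      have h1 := cc.phi_contract j (cc.wordMap_mem rest hx) (cc.wordMap_mem rest hy)
      have hb : (0:ℝ) ≤ cc.b⁻¹ := inv_nonneg.2 cc.b_pos.le
      calc |cc.wordMap (j :: rest) x - cc.wordMap (j :: rest) y|
          ≤ cc.b⁻¹ * |cc.wordMap rest x - cc.wordMap rest y| := h1
        _ ≤ cc.b⁻¹ * (cc.b⁻¹ ^ rest.length * |x - y|) := mul_le_mul_of_nonneg_left ih hb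
        _ = cc.b⁻¹ ^ (j :: rest).length * |x - y| := by
            rw [List.length_cons, pow_succ]; ring

private lemma log_step (j : Fin cc.N) {u v : ℝ} (hu : u ∈ Set.Icc (0:ℝ) 1)
    (hv : v ∈ Set.Icc (0:ℝ) 1) :
    Real.log |deriv (cc.φ j) u| - Real.log |deriv (cc.φ j) v|
      ≤ cc.c / (cc.b * cc.b ^ cc.γ) * |u - v| ^ cc.γ := by
  have hp : cc.φ j u ∈ cc.Jsub j := cc.hφ_maps j u hu
  have hq : cc.φ j v ∈ cc.Jsub j := cc.hφ_maps j v hv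
  have hfp : cc.b ≤ |deriv cc.f (cc.φ j u)| := cc.derivf_ge (Set.mem_iUnion.2 ⟨j, hp⟩)
  have hfq : cc.b ≤ |deriv cc.f (cc.φ j v)| := cc.derivf_ge (Set.mem_iUnion.2 ⟨j, hq⟩)
  have hfp0 : 0 < |deriv cc.f (cc.φ j u)| := lt_of_lt_of_le cc.b_pos hfp
  have hfq0 : 0 < |deriv cc.f (cc.φ j v)| := lt_of_lt_of_le cc.b_pos hfq
  have hrw : Real.log |deriv (cc.φ j) u| - Real.log |deriv (cc.φ j) v|
      = Real.log |deriv cc.f (cc.φ j v)| - Real.log |deriv cc.f (cc.φ j u)| := by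
    rw [cc.abs_deriv_phi j hu, cc.abs_deriv_phi j hv, Real.log_inv, Real.log_inv]
    ring
  rw [hrw]
  have key : Real.log |deriv cc.f (cc.φ j v)| - Real.log |deriv cc.f (cc.φ j u)|
      ≤ (|deriv cc.f (cc.φ j v)| - |deriv cc.f (cc.φ j u)|) / |deriv cc.f (cc.φ j u)| := by
    rw [← Real.log_div (ne_of_gt hfq0) (ne_of_gt hfp0)]
    have h1 := Real.log_le_sub_one_of_pos (div_pos hfq0 hfp0)
    have heq : |deriv cc.f (cc.φ j v)| / |deriv cc.f (cc.φ j u)| - 1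
        = (|deriv cc.f (cc.φ j v)| - |deriv cc.f (cc.φ j u)|) / |deriv cc.f (cc.φ j u)| := by
      field_simp
    linarith [heq.le]
  have habs : |deriv cc.f (cc.φ j v)| - |deriv cc.f (cc.φ j u)| ≤ cc.c * |cc.φ j v - cc.φ j u| ^ cc.γ :=
    le_trans (abs_sub_abs_le_abs_sub _ _) (cc.hHolder j (cc.φ j v) hq (cc.φ j u) hp)
  have hγpos : 0 < cc.γ := cc.hγ.1
  have hqpγ : |cc.φ j v - cc.φ j u| ^ cc.γ ≤ (cc.b ^ cc.γ)⁻¹ * |u - v| ^ cc.γ := by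
    have hqp : |cc.φ j v - cc.φ j u| ≤ cc.b⁻¹ * |u - v| := by
      rw [abs_sub_comm u v]
      exact cc.phi_contract j hv hu
    calc |cc.φ j v - cc.φ j u| ^ cc.γ ≤ (cc.b⁻¹ * |u - v|) ^ cc.γ :=
          Real.rpow_le_rpow (abs_nonneg _) hqp hγpos.le
      _ = cc.b⁻¹ ^ cc.γ * |u - v| ^ cc.γ :=
          Real.mul_rpow (inv_nonneg.2 cc.b_pos.le) (abs_nonneg _)
      _ = (cc.b ^ cc.γ)⁻¹ * |u - v| ^ cc.γ := by rw [Real.inv_rpow cc.b_pos.le]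
  have hdiv : (|deriv cc.f (cc.φ j v)| - |deriv cc.f (cc.φ j u)|) / |deriv cc.f (cc.φ j u)|
      ≤ cc.c * |cc.φ j v - cc.φ j u| ^ cc.γ / cc.b := by
    rw [div_le_div_iff₀ hfp0 cc.b_pos]
    have hnum : 0 ≤ cc.c * |cc.φ j v - cc.φ j u| ^ cc.γ :=
      mul_nonneg cc.hc.le (Real.rpow_nonneg (abs_nonneg _) _)
    nlinarith [mul_nonneg (sub_nonneg.2 habs) cc.b_pos.le,
      mul_nonneg hnum (sub_nonneg.2 hfp)]
  have hbγpos : (0:ℝ) < cc.b ^ cc.γ := lt_trans one_pos cc.bγ_gt_one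
  calc Real.log |deriv cc.f (cc.φ j v)| - Real.log |deriv cc.f (cc.φ j u)|
      ≤ (|deriv cc.f (cc.φ j v)| - |deriv cc.f (cc.φ j u)|) / |deriv cc.f (cc.φ j u)| := key
    _ ≤ cc.c * |cc.φ j v - cc.φ j u| ^ cc.γ / cc.b := hdiv
    _ ≤ cc.c * ((cc.b ^ cc.γ)⁻¹ * |u - v| ^ cc.γ) / cc.b :=
        (div_le_div_iff_of_pos_right cc.b_pos).2 (mul_le_mul_of_nonneg_left hqpγ cc.hc.le)
    _ = cc.c / (cc.b * cc.b ^ cc.γ) * |u - v| ^ cc.γ := by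
        field_simp

private lemma log_distortion (σ : List (Fin cc.N)) {x y : ℝ} (hx : x ∈ Set.Icc (0:ℝ) 1)
    (hy : y ∈ Set.Icc (0:ℝ) 1) :
    Real.log |deriv (cc.wordMap σ) x| - Real.log |deriv (cc.wordMap σ) y|
      ≤ cc.c / (cc.b * (cc.b ^ cc.γ - 1)) * (1 - ((cc.b ^ cc.γ)⁻¹) ^ σ.length) := by
  set r : ℝ := (cc.b ^ cc.γ)⁻¹ with hr_def
  set M : ℝ := cc.c / (cc.b * (cc.b ^ cc.γ - 1)) with hM_def
  have hbγpos : (0:ℝ) < cc.b ^ cc.γ := lt_trans one_pos cc.bγ_gt_one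
  have hbγ1 : (0:ℝ) < cc.b ^ cc.γ - 1 := sub_pos.2 cc.bγ_gt_one
  have hr_pos : 0 < r := inv_pos.2 hbγpos
  have hr_lt : r < 1 := by
    rw [hr_def, inv_lt_one_iff₀]; right; exact cc.bγ_gt_one
  have hb0 : cc.b ≠ 0 := ne_of_gt cc.b_pos
  have hbγ0 : cc.b ^ cc.γ ≠ 0 := ne_of_gt hbγpos
  have hbγ10 : cc.b ^ cc.γ - 1 ≠ 0 := ne_of_gt hbγ1
  have haM : cc.c / (cc.b * cc.b ^ cc.γ) = M * (1 - r) := by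
    rw [hM_def, hr_def]
    field_simp
  induction σ with
  | nil => simp [wordMap]
  | cons j rest ih =>
      have hux : cc.wordMap rest x ∈ Set.Icc (0:ℝ) 1 := cc.wordMap_mem rest hx
      have huy : cc.wordMap rest y ∈ Set.Icc (0:ℝ) 1 := cc.wordMap_mem rest hy
      have hstep := cc.log_step j hux huy
      -- bound |u - v|^γ by r ^ rest.length
      have hxy1 : |x - y| ≤ 1 := by
        rw [abs_le]; constructor <;> [linarith [hx.1, hy.2]; linarith [hx.2, hy.1]]
      have huv : |cc.wordMap rest x - cc.wordMap rest y| ≤ cc.b⁻¹ ^ rest.length := by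
        calc |cc.wordMap rest x - cc.wordMap rest y|
            ≤ cc.b⁻¹ ^ rest.length * |x - y| := cc.wordMap_contract rest hx hy
          _ ≤ cc.b⁻¹ ^ rest.length * 1 := by
              exact mul_le_mul_of_nonneg_left hxy1 (pow_nonneg (inv_nonneg.2 cc.b_pos.le) _)
          _ = cc.b⁻¹ ^ rest.length := mul_one _
      have hrn : |cc.wordMap rest x - cc.wordMap rest y| ^ cc.γ ≤ r ^ rest.length := by
        have h1 : |cc.wordMap rest x - cc.wordMap rest y| ^ cc.γ
            ≤ (cc.b⁻¹ ^ rest.length) ^ cc.γ :=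
          Real.rpow_le_rpow (abs_nonneg _) huv cc.hγ.1.le
        have h2 : ((cc.b⁻¹ ^ rest.length : ℝ)) ^ cc.γ = r ^ rest.length := by
          rw [← Real.rpow_natCast cc.b⁻¹ rest.length, ← Real.rpow_natCast r rest.length,
            ← Real.rpow_mul (inv_nonneg.2 cc.b_pos.le), mul_comm,
            Real.rpow_mul (inv_nonneg.2 cc.b_pos.le), hr_def, Real.inv_rpow cc.b_pos.le]
        rw [h2] at h1; exact h1
      have hM_nonneg : 0 ≤ M := by
        rw [hM_def]
        exact div_nonneg cc.hc.le (mul_nonneg cc.b_pos.le hbγ1.le)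
      have hsum : Real.log |deriv (cc.wordMap (j :: rest)) x|
            - Real.log |deriv (cc.wordMap (j :: rest)) y|
          = (Real.log |deriv (cc.φ j) (cc.wordMap rest x)|
              - Real.log |deriv (cc.φ j) (cc.wordMap rest y)|)
            + (Real.log |deriv (cc.wordMap rest) x| - Real.log |deriv (cc.wordMap rest) y|) := by
        rw [cc.wordMap_deriv_cons j rest hx, cc.wordMap_deriv_cons j rest hy, abs_mul, abs_mul,
          Real.log_mul (ne_of_gt (cc.abs_deriv_phi_pos j hux)) (ne_of_gt (cc.wordMap_deriv_pos rest hx)),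
          Real.log_mul (ne_of_gt (cc.abs_deriv_phi_pos j huy)) (ne_of_gt (cc.wordMap_deriv_pos rest hy))]
        ring
      rw [hsum]
      have h1 : Real.log |deriv (cc.φ j) (cc.wordMap rest x)|
          - Real.log |deriv (cc.φ j) (cc.wordMap rest y)| ≤ M * (1 - r) * r ^ rest.length := by
        calc _ ≤ cc.c / (cc.b * cc.b ^ cc.γ)
              * |cc.wordMap rest x - cc.wordMap rest y| ^ cc.γ := hstep
          _ ≤ cc.c / (cc.b * cc.b ^ cc.γ) * r ^ rest.length := by
              exact mul_le_mul_of_nonneg_left hrn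
                (div_nonneg cc.hc.le (mul_nonneg cc.b_pos.le hbγpos.le))
          _ = M * (1 - r) * r ^ rest.length := by rw [haM]
      calc _ ≤ M * (1 - r) * r ^ rest.length + M * (1 - r ^ rest.length) := add_le_add h1 ih
        _ = M * (1 - r ^ (j :: rest).length) := by
            rw [List.length_cons, pow_succ]; ring

private lemma distortion (σ : List (Fin cc.N)) {x y : ℝ} (hx : x ∈ Set.Icc (0:ℝ) 1)
    (hy : y ∈ Set.Icc (0:ℝ) 1) :
    |deriv (cc.wordMap σ) x| ≤ cc.xi * |deriv (cc.wordMap σ) y| := by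
  have hbγ1 : (0:ℝ) < cc.b ^ cc.γ - 1 := sub_pos.2 cc.bγ_gt_one
  have hld := cc.log_distortion σ hx hy
  have hM : cc.c / (cc.b * (cc.b ^ cc.γ - 1)) * (1 - ((cc.b ^ cc.γ)⁻¹) ^ σ.length)
      ≤ cc.c / (cc.b ^ cc.γ - 1) := by
    have hbγpos : (0:ℝ) < cc.b ^ cc.γ := lt_trans one_pos cc.bγ_gt_one
    have h1 : cc.c / (cc.b * (cc.b ^ cc.γ - 1)) * (1 - ((cc.b ^ cc.γ)⁻¹) ^ σ.length)
        ≤ cc.c / (cc.b * (cc.b ^ cc.γ - 1)) * 1 := by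
      apply mul_le_mul_of_nonneg_left _
        (div_nonneg cc.hc.le (mul_nonneg cc.b_pos.le hbγ1.le))
      have h0 : (0:ℝ) ≤ ((cc.b ^ cc.γ)⁻¹) ^ σ.length :=
        pow_nonneg (inv_nonneg.2 hbγpos.le) _
      linarith
    rw [mul_one] at h1
    refine h1.trans ?_
    apply div_le_div_of_nonneg_left cc.hc.le hbγ1
    nlinarith [cc.b_pos, cc.hb1]
  have hlog : Real.log |deriv (cc.wordMap σ) x|
      ≤ cc.c / (cc.b ^ cc.γ - 1) + Real.log |deriv (cc.wordMap σ) y| := by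
    linarith [hld.trans hM]
  have hxpos := cc.wordMap_deriv_pos σ hx
  have hypos := cc.wordMap_deriv_pos σ hy
  calc |deriv (cc.wordMap σ) x| = Real.exp (Real.log |deriv (cc.wordMap σ) x|) :=
        (Real.exp_log hxpos).symm
    _ ≤ Real.exp (cc.c / (cc.b ^ cc.γ - 1) + Real.log |deriv (cc.wordMap σ) y|) :=
        Real.exp_le_exp.2 hlog
    _ = cc.xi * |deriv (cc.wordMap σ) y| := by
        rw [Real.exp_add, Real.exp_log hypos, xi]

private lemma wordMap_append (σ τ : List (Fin cc.N)) :
    cc.wordMap (σ ++ τ) = cc.wordMap σ ∘ cc.wordMap τ := by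
  induction σ with
  | nil => rfl
  | cons j rest ih =>
      show cc.φ j ∘ cc.wordMap (rest ++ τ) = (cc.φ j ∘ cc.wordMap rest) ∘ cc.wordMap τ
      rw [ih, Function.comp_assoc]

private lemma φnorm_nonempty (σ : List (Fin cc.N)) :
    ((fun x => |deriv (cc.wordMap σ) x|) '' Set.Icc 0 1).Nonempty :=
  ⟨_, ⟨0, Set.left_mem_Icc.2 zero_le_one, rfl⟩⟩

private lemma φnorm_bddAbove (σ : List (Fin cc.N)) :
    BddAbove ((fun x => |deriv (cc.wordMap σ) x|) '' Set.Icc 0 1) := by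
  refine ⟨cc.b⁻¹ ^ σ.length, ?_⟩
  rintro z ⟨x, hx, rfl⟩
  exact cc.wordMap_deriv_le σ hx

private lemma le_φnorm (σ : List (Fin cc.N)) {x : ℝ} (hx : x ∈ Set.Icc (0:ℝ) 1) :
    |deriv (cc.wordMap σ) x| ≤ cc.φnorm σ :=
  le_csSup (cc.φnorm_bddAbove σ) ⟨x, hx, rfl⟩

private lemma φnorm_pos (σ : List (Fin cc.N)) : 0 < cc.φnorm σ :=
  lt_of_lt_of_le (cc.wordMap_deriv_pos σ (Set.left_mem_Icc.2 zero_le_one))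
    (cc.le_φnorm σ (Set.left_mem_Icc.2 zero_le_one))

private lemma φnorm_le_xi_mul (σ : List (Fin cc.N)) {y : ℝ} (hy : y ∈ Set.Icc (0:ℝ) 1) :
    cc.φnorm σ ≤ cc.xi * |deriv (cc.wordMap σ) y| := by
  apply csSup_le (cc.φnorm_nonempty σ)
  rintro z ⟨x, hx, rfl⟩
  exact cc.distortion σ hx hy

end CookieCutter

theorem norm_submultiplicative (cc : CookieCutter) :
    ∀ σ τ : List (Fin cc.N), σ ≠ [] → τ ≠ [] →
      cc.xi⁻¹ * cc.φnorm σ * cc.φnorm τ ≤ cc.φnorm (σ ++ τ) ∧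
      cc.φnorm (σ ++ τ) ≤ cc.φnorm σ * cc.φnorm τ := by
  intro σ τ _ _
  have hchain : ∀ x ∈ Set.Icc (0:ℝ) 1,
      deriv (cc.wordMap (σ ++ τ)) x
        = deriv (cc.wordMap σ) (cc.wordMap τ x) * deriv (cc.wordMap τ) x := by
    intro x hx
    rw [cc.wordMap_append σ τ]
    exact deriv_comp (x := x) (cc.wordMap_diff σ (cc.wordMap_mem τ hx)) (cc.wordMap_diff τ hx)
  have hξpos : 0 < cc.xi := Real.exp_pos _
  constructor
  · -- lower bound
    have hK : 0 < cc.xi⁻¹ * cc.φnorm σ := mul_pos (inv_pos.2 hξpos) (cc.φnorm_pos σ)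
    have key : ∀ x ∈ Set.Icc (0:ℝ) 1,
        cc.xi⁻¹ * cc.φnorm σ * |deriv (cc.wordMap τ) x| ≤ cc.φnorm (σ ++ τ) := by
      intro x hx
      have h1 : cc.φnorm σ ≤ cc.xi * |deriv (cc.wordMap σ) (cc.wordMap τ x)| :=
        cc.φnorm_le_xi_mul σ (cc.wordMap_mem τ hx)
      have h2 : cc.xi⁻¹ * cc.φnorm σ ≤ |deriv (cc.wordMap σ) (cc.wordMap τ x)| := by
        rw [inv_mul_le_iff₀ hξpos]
        linarith
      calc cc.xi⁻¹ * cc.φnorm σ * |deriv (cc.wordMap τ) x|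
          ≤ |deriv (cc.wordMap σ) (cc.wordMap τ x)| * |deriv (cc.wordMap τ) x| :=
            mul_le_mul_of_nonneg_right h2 (abs_nonneg _)
        _ = |deriv (cc.wordMap (σ ++ τ)) x| := by rw [hchain x hx, abs_mul]
        _ ≤ cc.φnorm (σ ++ τ) := cc.le_φnorm _ hx
    have hτle : cc.φnorm τ ≤ cc.φnorm (σ ++ τ) / (cc.xi⁻¹ * cc.φnorm σ) := by
      apply csSup_le (cc.φnorm_nonempty τ)
      rintro z ⟨x, hx, rfl⟩
      rw [le_div_iff₀ hK, mul_comm]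
      exact key x hx
    calc cc.xi⁻¹ * cc.φnorm σ * cc.φnorm τ
        ≤ cc.xi⁻¹ * cc.φnorm σ * (cc.φnorm (σ ++ τ) / (cc.xi⁻¹ * cc.φnorm σ)) :=
          mul_le_mul_of_nonneg_left hτle hK.le
      _ = cc.φnorm (σ ++ τ) := by
          have hξ0 : cc.xi ≠ 0 := ne_of_gt hξpos
          have hσ0 : cc.φnorm σ ≠ 0 := ne_of_gt (cc.φnorm_pos σ)
          field_simp
  · -- upper bound
    apply csSup_le (cc.φnorm_nonempty (σ ++ τ))
    rintro z ⟨x, hx, rfl⟩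
    have h := hchain x hx
    simp only [h, abs_mul]
    exact mul_le_mul (cc.le_φnorm σ (cc.wordMap_mem τ hx)) (cc.le_φnorm τ hx)
      (abs_nonneg _) (cc.φnorm_pos σ).le
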